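/- Let b ∈ (0,1], λ > 0, M > 0 with b·λ·M > 1, let Q < 0 be the unique negative real solution of b·λ·e^{Q·M} = b·λ + Q, and set k = −Q/(M·(b·λ + Q)). Then for every x with 0 ≤ x ≤ M: (1/M)·(1 − e^{Q·x}) = ∫₀^x λ·e^{−λ(x−μ)}·(1/M)·(1 − e^{Q·μ}) dμ + b·∫_M^{x+M} λ·e^{−λ(x+M−μ)}·k·e^{Q·μ} dμ. -/

import Mathlib

open MeasureTheory intervalIntegral

/-- The lower branch `g₁(x) = (1 − e^{Qx})/M` (for `0 ≤ x ≤ M`) satisfies the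
stationary integral equation of the energy buffer on the lower range, where the
upper branch is `g₂(μ) = k e^{Qμ}` on `[M,∞)` and `k = −Q/(M(bλ+Q))`. -/
theorem lower_branch_stationary_integral_equation
    (b lam M Q k : ℝ) (hb0 : 0 < b) (hb1 : b ≤ 1) (hlam : 0 < lam) (hM : 0 < M)
    (hpsi : 1 < b * lam * M) (hQ : Q < 0)
    (hroot : b * lam * Real.exp (Q * M) = b * lam + Q)
    (hk : k = -Q / (M * (b * lam + Q))) :
    ∀ x : ℝ, 0 ≤ x → x ≤ M →
      (1 / M) * (1 - Real.exp (Q * x))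
        = (∫ μ in (0:ℝ)..x,
            lam * Real.exp (-lam * (x - μ)) * ((1 / M) * (1 - Real.exp (Q * μ))))
          + b * ∫ μ in M..(x + M),
              lam * Real.exp (-lam * (x + M - μ)) * (k * Real.exp (Q * μ)) := by
  intro x hx0 hxM
  have hbl : 0 < b * lam := mul_pos hb0 hlam
  have hB : 0 < b * lam + Q := by
    rw [← hroot]; positivity
  have hL : 0 < lam + Q := by
    nlinarith [mul_nonneg hlam.le (sub_nonneg.2 hb1)]
  have hexp : ∀ c μ : ℝ, HasDerivAt (fun t => Real.exp (c * t)) (c * Real.exp (c * μ)) μ := by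
    intro c μ
    simpa [mul_comm] using ((hasDerivAt_id μ).const_mul c).exp
  -- first integral
  have h1 : (∫ μ in (0:ℝ)..x,
        lam * Real.exp (-lam * (x - μ)) * ((1 / M) * (1 - Real.exp (Q * μ))))
      = (fun μ => (1 / M) * Real.exp (-lam * x) *
          (Real.exp (lam * μ) - lam / (lam + Q) * Real.exp ((lam + Q) * μ))) x
        - (fun μ => (1 / M) * Real.exp (-lam * x) *
          (Real.exp (lam * μ) - lam / (lam + Q) * Real.exp ((lam + Q) * μ))) 0 := by
    have key : ∀ μ ∈ Set.uIcc (0:ℝ) x, HasDerivAt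
        (fun μ => (1 / M) * Real.exp (-lam * x) *
          (Real.exp (lam * μ) - lam / (lam + Q) * Real.exp ((lam + Q) * μ)))
        (lam * Real.exp (-lam * (x - μ)) * ((1 / M) * (1 - Real.exp (Q * μ)))) μ := by
      intro μ _
      have hd := (((hexp lam μ).sub ((hexp (lam + Q) μ).const_mul (lam / (lam + Q)))).const_mul
        ((1 / M) * Real.exp (-lam * x)))
      refine hd.congr_deriv ?_
      have e1 : Real.exp ((lam + Q) * μ) = Real.exp (lam * μ) * Real.exp (Q * μ) := by
        rw [← Real.exp_add]; ring_nf
      have e2 : Real.exp (-lam * (x - μ)) = Real.exp (-lam * x) * Real.exp (lam * μ) := by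
        rw [← Real.exp_add]; ring_nf
      rw [e1, e2]
      field_simp
    exact intervalIntegral.integral_eq_sub_of_hasDerivAt key
      (by apply Continuous.intervalIntegrable; fun_prop)
  -- second integral
  have h2 : (∫ μ in M..(x + M),
        lam * Real.exp (-lam * (x + M - μ)) * (k * Real.exp (Q * μ)))
      = (fun μ => k * lam / (lam + Q) * Real.exp (-lam * (x + M)) *
          Real.exp ((lam + Q) * μ)) (x + M)
        - (fun μ => k * lam / (lam + Q) * Real.exp (-lam * (x + M)) *
          Real.exp ((lam + Q) * μ)) M := by
    have key : ∀ μ ∈ Set.uIcc M (x + M), HasDerivAt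
        (fun μ => k * lam / (lam + Q) * Real.exp (-lam * (x + M)) *
          Real.exp ((lam + Q) * μ))
        (lam * Real.exp (-lam * (x + M - μ)) * (k * Real.exp (Q * μ))) μ := by
      intro μ _
      have hd := ((hexp (lam + Q) μ).const_mul
        (k * lam / (lam + Q) * Real.exp (-lam * (x + M))))
      refine hd.congr_deriv ?_
      have e1 : Real.exp ((lam + Q) * μ) = Real.exp (lam * μ) * Real.exp (Q * μ) := by
        rw [← Real.exp_add]; ring_nf
      have e2 : Real.exp (-lam * (x + M - μ)) = Real.exp (-lam * (x + M)) * Real.exp (lam * μ) := by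
        rw [← Real.exp_add]; ring_nf
      rw [e1, e2]
      field_simp
    exact intervalIntegral.integral_eq_sub_of_hasDerivAt key
      (by apply Continuous.intervalIntegrable; fun_prop)
  rw [h1, h2]
  simp only
  -- expand all exponentials into products of basic ones
  have eLx : Real.exp ((lam + Q) * x) = Real.exp (lam * x) * Real.exp (Q * x) := by
    rw [← Real.exp_add]; ring_nf
  have eLxM : Real.exp ((lam + Q) * (x + M))
      = Real.exp (lam * x) * Real.exp (Q * x) * Real.exp (lam * M) * Real.exp (Q * M) := by
    rw [← Real.exp_add, ← Real.exp_add, ← Real.exp_add]; ring_nf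
  have eLM : Real.exp ((lam + Q) * M) = Real.exp (lam * M) * Real.exp (Q * M) := by
    rw [← Real.exp_add]; ring_nf
  have enx : Real.exp (-lam * x) = (Real.exp (lam * x))⁻¹ := by
    rw [← Real.exp_neg]; ring_nf
  have enxM : Real.exp (-lam * (x + M)) = (Real.exp (lam * x) * Real.exp (lam * M))⁻¹ := by
    rw [← Real.exp_add, ← Real.exp_neg]; ring_nf
  have eQM : Real.exp (Q * M) = (b * lam + Q) / (b * lam) := by
    field_simp [← hroot]
    linarith
  rw [eLx, eLxM, eLM, enx, enxM, eQM, hk]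
  have hA : Real.exp (lam * x) ≠ 0 := (Real.exp_pos _).ne'
  have hC : Real.exp (lam * M) ≠ 0 := (Real.exp_pos _).ne'
  have hB' : b * lam + Q ≠ 0 := hB.ne'
  have hL' : lam + Q ≠ 0 := hL.ne'
  have hB'' : lam * b + Q ≠ 0 := by rw [mul_comm]; exact hB'
  rw [mul_zero, mul_zero, Real.exp_zero]
  field_simp
  ring
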